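/- Let Q be a subgroup of SL(2, ℤ/5ℤ) of order 8, and let θ and θ′ be irreducible two-dimensional complex representations of SL(2, ℤ/5ℤ). Then the restrictions of θ and θ′ to Q are irreducible and are isomorphic to each other as representations of Q. -/

import Mathlib

open scoped TensorProduct

/-- A submodule `p` is a subrepresentation of `ρ` if it is stable under the action. -/
def IsSubrep {k G V : Type*} [CommSemiring k] [Monoid G] [AddCommMonoid V] [Module k V]
    (ρ : Representation k G V) (p : Submodule k V) : Prop :=
  ∀ g : G, ∀ v ∈ p, ρ g v ∈ p

/-- A representation is irreducible if it is nonzero and has no proper nonzero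
subrepresentations. -/
def IsIrreducibleRep {k G V : Type*} [CommSemiring k] [Monoid G] [AddCommMonoid V] [Module k V]
    (ρ : Representation k G V) : Prop :=
  Nontrivial V ∧ ∀ p : Submodule k V, IsSubrep ρ p → p = ⊥ ∨ p = ⊤

/-- Two representations are isomorphic if there is an equivariant linear equivalence. -/
def RepIso {k G V W : Type*} [CommSemiring k] [Monoid G] [AddCommMonoid V] [Module k V]
    [AddCommMonoid W] [Module k W]
    (ρ : Representation k G V) (σ : Representation k G W) : Prop :=
  ∃ e : V ≃ₗ[k] W, ∀ (g : G) (v : V), e (ρ g v) = σ g (e v)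

namespace SL25

abbrev SL5 := Matrix.SpecialLinearGroup (Fin 2) (ZMod 5)

instance : DecidableEq SL5 := fun a b =>
  decidable_of_iff (a.1 = b.1) Subtype.ext_iff.symm

def U (s : ZMod 5) : SL5 := ⟨!![1,s;0,1], by simp [Matrix.det_fin_two_of]⟩
def L (s : ZMod 5) : SL5 := ⟨!![1,0;s,1], by simp [Matrix.det_fin_two_of]⟩
def Ee : SL5 := U 1
def Fe : SL5 := L 1
def nI : SL5 := ⟨!![4,0;0,4], by decide⟩
def x₀ : SL5 := ⟨!![2,0;0,3], by decide⟩
def y₀ : SL5 := ⟨!![0,1;4,0], by decide⟩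
def gy : SL5 := ⟨!![1,1;2,3], by decide⟩
def gz : SL5 := ⟨!![1,2;1,3], by decide⟩
def dec (M : SL5) : SL5 :=
  U ((M.1 0 0 - 1) * (M.1 1 0)^3) * L (M.1 1 0) * U ((M.1 1 1 - 1) * (M.1 1 0)^3)

set_option maxRecDepth 1000000 in
theorem uniq_inv : ∀ x : SL5, x^2 = 1 → x = 1 ∨ x = nI := by decide
set_option maxRecDepth 1000000 in
theorem no_order8 : ∀ x : SL5, x^8 = 1 → x^4 = 1 := by decide
set_option maxRecDepth 1000000 in
theorem central_nI : ∀ g : SL5, g * nI = nI * g := by decide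
set_option maxRecDepth 1000000 in
theorem D3 : ∀ s : ZMod 5, U s = Ee ^ s.val ∧ L s = Fe ^ s.val := by decide
set_option maxRecDepth 1000000 in
theorem D4 : ∀ M : SL5, M = dec M ∨ Fe * M = dec (Fe * M) := by decide
theorem nI_mul_nI : nI * nI = 1 := by decide
theorem nI_ne_one : nI ≠ 1 := by decide
set_option maxRecDepth 1000000 in
theorem x₀_sq : x₀^2 = nI := by decide
set_option maxRecDepth 1000000 in
theorem y₀_sq : y₀^2 = nI := by decide
set_option maxRecDepth 1000000 in
theorem z₀_sq : (x₀*y₀)^2 = nI := by decide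
set_option maxRecDepth 1000000 in
theorem y₀_conj : y₀ = gy * x₀ * gy⁻¹ := by decide
set_option maxRecDepth 1000000 in
theorem z₀_conj : x₀*y₀ = gz * x₀ * gz⁻¹ := by decide
set_option maxRecDepth 1000000 in
theorem Ee_comm : Ee = x₀ * (U 2) * x₀⁻¹ * (U 2)⁻¹ := by decide
set_option maxRecDepth 1000000 in
theorem Fe_comm : Fe = x₀ * (L 2) * x₀⁻¹ * (L 2)⁻¹ := by decide
set_option maxRecDepth 1000000 in
theorem Ee_conj : Ee = (y₀ * x₀ * y₀⁻¹) * ((U 2) * x₀ * (U 2)⁻¹) := by decide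
set_option maxRecDepth 1000000 in
theorem Fe_conj : Fe = (y₀ * x₀ * y₀⁻¹) * ((L 2) * x₀ * (L 2)⁻¹) := by decide


theorem gen_triv {M : Type*} [Monoid M] (ψ : SL5 →* M) (hE : ψ Ee = 1) (hF : ψ Fe = 1) :
    ∀ g, ψ g = 1 := by
  have hU : ∀ s, ψ (U s) = 1 := fun s => by rw [(D3 s).1, map_pow, hE, one_pow]
  have hL : ∀ s, ψ (L s) = 1 := fun s => by rw [(D3 s).2, map_pow, hF, one_pow]
  have hdec : ∀ g, ψ (dec g) = 1 := fun g => by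
    rw [dec, map_mul, map_mul, hU, hL, hU, one_mul, one_mul]
  intro g
  rcases D4 g with h | h
  · rw [h]; exact hdec _
  · have h2 := congrArg ψ h
    rw [map_mul, hF, one_mul, hdec] at h2
    exact h2

theorem comm_map_one {M : Type*} [CommMonoid M] (ψ : SL5 →* M) (x y : SL5) :
    ψ (x * y * x⁻¹ * y⁻¹) = 1 := by
  rw [map_mul, map_mul, map_mul, mul_assoc, mul_mul_mul_comm, ← map_mul, ← map_mul,
    mul_inv_cancel, mul_inv_cancel, map_one, one_mul]

theorem conj_map_one {M : Type*} [Monoid M] (ψ : SL5 →* M) {x : SL5} (hx : ψ x = 1) (g : SL5) :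
    ψ (g * x * g⁻¹) = 1 := by
  rw [map_mul, map_mul, hx, mul_one, ← map_mul, mul_inv_cancel, map_one]

variable {V : Type*} [AddCommGroup V] [Module ℂ V]

theorem exists_basis_pair (h2 : Module.finrank ℂ V = 2) {e f : V}
    (hli : LinearIndependent ℂ ![e, f]) : ∃ b : Module.Basis (Fin 2) ℂ V, b 0 = e ∧ b 1 = f := by
  have card : Fintype.card (Fin 2) = Module.finrank ℂ V := by simp [h2]
  refine ⟨basisOfLinearIndependentOfCardEqFinrank hli card, ?_, ?_⟩ <;>
    simp [coe_basisOfLinearIndependentOfCardEqFinrank]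

theorem top_of_pair_mem (h2 : Module.finrank ℂ V = 2) {e f : V}
    (hli : LinearIndependent ℂ ![e, f]) (p : Submodule ℂ V) (he : e ∈ p) (hf : f ∈ p) :
    p = ⊤ := by
  obtain ⟨b, hb0, hb1⟩ := exists_basis_pair h2 hli
  rw [eq_top_iff, ← b.span_eq, Submodule.span_le]
  rintro x ⟨i, rfl⟩
  fin_cases i
  · rwa [show b ⟨0, by norm_num⟩ = e from hb0]
  · rwa [show b ⟨1, by norm_num⟩ = f from hb1]

theorem pair_li {T : Module.End ℂ V} {e f : V} {μ ν : ℂ} (hT1 : T e = μ • e) (hT2 : T f = ν • f)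
    (hne : μ ≠ ν) (he : e ≠ 0) (hf : f ≠ 0) : LinearIndependent ℂ ![e, f] := by
  rw [linearIndependent_fin2]
  refine ⟨by simpa using hf, fun a ha => ?_⟩
  simp only [Matrix.cons_val_one, Matrix.cons_val_zero] at ha
  have h1 : T (a • f) = μ • (a • f) := by rw [ha]; exact hT1
  rw [map_smul, hT2, smul_smul, smul_smul] at h1
  have h0 : (a * ν - μ * a) • f = 0 := by rw [sub_smul, h1, sub_self]
  rcases smul_eq_zero.mp h0 with h | h
  · have : a * (ν - μ) = 0 := by ring_nf; ring_nf at h; linear_combination h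
    rcases mul_eq_zero.mp this with h' | h'
    · apply he; rw [← ha, h', zero_smul]
    · exact hne (show μ = ν by linear_combination -h')
  · exact hf h

theorem eig_in (A B : Module.End ℂ V) (hA : A * A = -1) (hB : B * B = -1)
    (hBA : B * A = -(A * B)) (p : Submodule ℂ V) (hpA : ∀ v ∈ p, A v ∈ p)
    (hpB : ∀ v ∈ p, B v ∈ p) (hp : p ≠ ⊥) :
    ∃ e, e ∈ p ∧ e ≠ 0 ∧ A e = Complex.I • e := by
  obtain ⟨v, hvp, hv0⟩ := p.ne_bot_iff.mp hp
  have hAA : ∀ w, A (A w) = -w := fun w => by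
    have : (A * A) w = (-1 : Module.End ℂ V) w := by rw [hA]
    simpa [Module.End.mul_apply] using this
  have hBB : ∀ w, B (B w) = -w := fun w => by
    have : (B * B) w = (-1 : Module.End ℂ V) w := by rw [hB]
    simpa [Module.End.mul_apply] using this
  have hanti : ∀ w, A (B w) = -(B (A w)) := fun w => by
    have : (B * A) w = (-(A * B)) w := by rw [hBA]
    simp only [Module.End.mul_apply, LinearMap.neg_apply] at this
    rw [← neg_eq_iff_eq_neg, ← this]
  set u₁ := A v + Complex.I • v with hu₁def
  set u₂ := A v - Complex.I • v with hu₂def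
  have hu₁ : A u₁ = Complex.I • u₁ := by
    rw [hu₁def, map_add, map_smul, hAA, smul_add, smul_smul, Complex.I_mul_I, neg_one_smul]
    abel
  have hu₂ : A u₂ = -(Complex.I • u₂) := by
    rw [hu₂def, map_sub, map_smul, hAA, smul_sub, smul_smul, Complex.I_mul_I, neg_one_smul]
    abel
  by_cases h1 : u₁ = 0
  · by_cases h2 : u₂ = 0
    · exfalso
      have : u₁ - u₂ = (2 * Complex.I) • v := by
        rw [hu₁def, hu₂def, two_mul, add_smul]; abel
      rw [h1, h2, sub_zero] at this
      have := (smul_eq_zero.mp this.symm).resolve_left (by simp [Complex.I_ne_zero])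
      exact hv0 this
    · refine ⟨B u₂, hpB _ (p.sub_mem (hpA v hvp) (p.smul_mem _ hvp)), ?_, ?_⟩
      · intro h; apply h2; have := hBB u₂; rw [h, map_zero] at this
        simpa using this.symm
      · rw [hanti, hu₂, map_neg, map_smul, neg_neg]
  · exact ⟨u₁, p.add_mem (hpA v hvp) (p.smul_mem _ hvp), h1, hu₁⟩

theorem I_ne_negI : Complex.I ≠ -Complex.I := by
  intro h
  have h2 : (2 : ℂ) * Complex.I = 0 := by linear_combination h
  rcases mul_eq_zero.mp h2 with h' | h'
  · norm_num at h'
  · exact Complex.I_ne_zero h'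

theorem quat_core_top (h2 : Module.finrank ℂ V = 2) (A B : Module.End ℂ V) (hA : A * A = -1)
    (hB : B * B = -1) (hBA : B * A = -(A * B)) (p : Submodule ℂ V)
    (hpA : ∀ v ∈ p, A v ∈ p) (hpB : ∀ v ∈ p, B v ∈ p) (hp : p ≠ ⊥) : p = ⊤ := by
  obtain ⟨e, hep, he0, heA⟩ := eig_in A B hA hB hBA p hpA hpB hp
  have hanti : ∀ w, A (B w) = -(B (A w)) := fun w => by
    have : (B * A) w = (-(A * B)) w := by rw [hBA]
    simp only [Module.End.mul_apply, LinearMap.neg_apply] at this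
    rw [← neg_eq_iff_eq_neg, ← this]
  have hBB : ∀ w, B (B w) = -w := fun w => by
    have : (B * B) w = (-1 : Module.End ℂ V) w := by rw [hB]
    simpa [Module.End.mul_apply] using this
  have hf0 : B e ≠ 0 := by
    intro h; apply he0; have := hBB e; rw [h, map_zero] at this; simpa using this.symm
  have hfA : A (B e) = (-Complex.I) • B e := by
    rw [hanti, heA, map_smul, neg_smul]
  have li := pair_li heA hfA I_ne_negI he0 hf0
  exact top_of_pair_mem h2 li p hep (hpB e hep)

theorem quat_basis (h2 : Module.finrank ℂ V = 2) (A B : Module.End ℂ V) (hA : A * A = -1)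
    (hB : B * B = -1) (hBA : B * A = -(A * B)) :
    ∃ e f : V, e ≠ 0 ∧ A e = Complex.I • e ∧ A f = (-Complex.I) • f ∧ B e = f ∧ B f = -e ∧
      LinearIndependent ℂ ![e, f] := by
  haveI : Nontrivial V := Module.nontrivial_of_finrank_eq_succ (n := 1) h2
  obtain ⟨e, _, he0, heA⟩ := eig_in A B hA hB hBA ⊤ (fun v _ => trivial) (fun v _ => trivial)
    (by simp)
  have hanti : ∀ w, A (B w) = -(B (A w)) := fun w => by
    have : (B * A) w = (-(A * B)) w := by rw [hBA]
    simp only [Module.End.mul_apply, LinearMap.neg_apply] at this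
    rw [← neg_eq_iff_eq_neg, ← this]
  have hBB : ∀ w, B (B w) = -w := fun w => by
    have : (B * B) w = (-1 : Module.End ℂ V) w := by rw [hB]
    simpa [Module.End.mul_apply] using this
  have hf0 : B e ≠ 0 := by
    intro h; apply he0; have := hBB e; rw [h, map_zero] at this; simpa using this.symm
  have hfA : A (B e) = (-Complex.I) • B e := by rw [hanti, heA, map_smul, neg_smul]
  exact ⟨e, B e, he0, heA, hfA, rfl, hBB e, pair_li heA hfA I_ne_negI he0 hf0⟩

theorem det_invol (h2 : Module.finrank ℂ V = 2) (T : Module.End ℂ V) (hT : T * T = 1)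
    (h1 : T ≠ 1) (hm : T ≠ -1) : LinearMap.det T = -1 := by
  haveI := Module.finite_of_finrank_eq_succ (n := 1) h2
  have hTT : ∀ w, T (T w) = w := fun w => by
    have : (T * T) w = (1 : Module.End ℂ V) w := by rw [hT]
    simpa [Module.End.mul_apply] using this
  obtain ⟨v, hv⟩ : ∃ v, T v ≠ -v := by
    by_contra h; push_neg at h
    exact hm (LinearMap.ext fun w => by simp [h w])
  obtain ⟨w, hw⟩ : ∃ w, T w ≠ w := by
    by_contra h; push_neg at h
    exact h1 (LinearMap.ext fun w => by simp [h w])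
  set e := v + T v with hedef
  set f := w - T w with hfdef
  have he0 : e ≠ 0 := fun h => hv (by rw [eq_neg_iff_add_eq_zero, add_comm]; exact h)
  have hf0 : f ≠ 0 := fun h => hw (sub_eq_zero.mp h).symm
  have hTe : T e = (1 : ℂ) • e := by rw [hedef, map_add, hTT, one_smul]; abel
  have hTf : T f = (-1 : ℂ) • f := by
    rw [hfdef, map_sub, hTT, neg_smul, one_smul, neg_sub]
  have li := pair_li hTe hTf (by norm_num) he0 hf0
  obtain ⟨b, hb0, hb1⟩ := exists_basis_pair h2 li
  have hM : LinearMap.toMatrix b b T = !![1, 0; 0, -1] := by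
    have e0 : T (b 0) = b 0 := by rw [hb0, hTe, one_smul]
    have e1 : T (b 1) = -(b 1) := by rw [hb1, hTf, neg_smul, one_smul]
    ext i j
    rw [LinearMap.toMatrix_apply]
    fin_cases j <;> fin_cases i <;>
      simp [e0, e1, Module.Basis.repr_self, Finsupp.single_apply]
  rw [← LinearMap.det_toMatrix b, hM, Matrix.det_fin_two_of]
  norm_num


theorem no_triv_center (θ : Representation ℂ SL5 V) (h2 : Module.finrank ℂ V = 2)
    (hθ : IsIrreducibleRep θ) (hz : θ nI = 1) : False := by
  haveI := Module.finite_of_finrank_eq_succ (n := 1) h2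
  let φ : SL5 →* ℂ := (LinearMap.det : (V →ₗ[ℂ] V) →* ℂ).comp θ
  have hφE : φ Ee = 1 := by rw [Ee_comm]; exact comm_map_one φ _ _
  have hφF : φ Fe = 1 := by rw [Fe_comm]; exact comm_map_one φ _ _
  have hdet : ∀ g, LinearMap.det (θ g) = 1 := gen_triv φ hφE hφF
  have hsq : ∀ g : SL5, g ^ 2 = nI → θ g * θ g = 1 := fun g hg => by
    rw [← map_mul, ← pow_two, hg, hz]
  have key : ∀ g : SL5, g ^ 2 = nI → θ g = 1 ∨ θ g = -1 := by
    intro g hg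
    by_contra hc
    push_neg at hc
    have hd := det_invol h2 (θ g) (hsq g hg) hc.1 hc.2
    rw [hdet g] at hd
    norm_num at hd
  have conj_red : ∀ {x g : SL5}, x = g * x₀ * g⁻¹ → θ x = 1 → θ x₀ = 1 := by
    intro x g hconj hx
    have : θ (g⁻¹ * x * g) = 1 := by
      rw [map_mul, map_mul, hx, mul_one, ← map_mul, inv_mul_cancel, map_one]
    rw [hconj] at this
    rw [show g⁻¹ * (g * x₀ * g⁻¹) * g = x₀ by group] at this
    exact this
  have hx1 : θ x₀ = 1 := by
    rcases key x₀ x₀_sq with h | h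
    · exact h
    rcases key y₀ y₀_sq with h' | h'
    · exact conj_red y₀_conj h'
    · have hz1 : θ (x₀ * y₀) = 1 := by rw [map_mul, h, h', neg_mul_neg, one_mul]
      exact conj_red z₀_conj hz1
  have hE1 : θ Ee = 1 := by
    rw [Ee_conj, map_mul, conj_map_one θ hx1, conj_map_one θ hx1, one_mul]
  have hF1 : θ Fe = 1 := by
    rw [Fe_conj, map_mul, conj_map_one θ hx1, conj_map_one θ hx1, one_mul]
  have htriv := gen_triv θ hE1 hF1
  haveI := hθ.1
  obtain ⟨v, hv⟩ := exists_ne (0 : V)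
  have hsub : IsSubrep θ (Submodule.span ℂ {v}) := by
    intro g w hw
    rw [htriv g]
    simpa using hw
  rcases hθ.2 _ hsub with h | h
  · exact hv (Submodule.span_singleton_eq_bot.mp h)
  · have hfr := finrank_span_singleton (K := ℂ) hv
    rw [h, finrank_top, h2] at hfr
    norm_num at hfr

theorem theta_nI (θ : Representation ℂ SL5 V) (h2 : Module.finrank ℂ V = 2)
    (hθ : IsIrreducibleRep θ) : θ nI = -1 := by
  have hcomm : ∀ g, θ g * θ nI = θ nI * θ g := fun g => by
    rw [← map_mul, ← map_mul, central_nI]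
  have hsq : θ nI * θ nI = 1 := by rw [← map_mul, nI_mul_nI, map_one]
  set T := θ nI with hT
  have hTT : ∀ w, T (T w) = w := fun w => by
    have : (T * T) w = (1 : Module.End ℂ V) w := by rw [hsq]
    simpa [Module.End.mul_apply] using this
  have hker : IsSubrep θ (LinearMap.ker (T - 1)) := by
    intro g v hv
    rw [LinearMap.mem_ker, LinearMap.sub_apply, Module.End.one_apply, sub_eq_zero] at hv ⊢
    have hc : T (θ g v) = θ g (T v) := by
      rw [← Module.End.mul_apply, ← hcomm g, Module.End.mul_apply]
    rw [hc, hv]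
  rcases hθ.2 _ hker with hbot | htop
  · ext v
    have hmem : (T + 1) v ∈ LinearMap.ker (T - 1) := by
      rw [LinearMap.mem_ker, LinearMap.sub_apply, Module.End.one_apply, sub_eq_zero,
        LinearMap.add_apply, Module.End.one_apply, map_add, hTT]
      abel
    rw [hbot, Submodule.mem_bot, LinearMap.add_apply, Module.End.one_apply] at hmem
    have : T v = -v := eq_neg_of_add_eq_zero_left hmem
    simpa using this
  · exfalso
    apply no_triv_center θ h2 hθ
    ext v
    have hv : v ∈ LinearMap.ker (T - 1) := htop ▸ Submodule.mem_top
    rw [LinearMap.mem_ker, LinearMap.sub_apply, Module.End.one_apply, sub_eq_zero] at hv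
    simpa using hv


theorem sub_eq_of_le_card {H K : Subgroup SL5} (h : H ≤ K) (hc : Nat.card K ≤ Nat.card H) :
    H = K := by
  apply SetLike.ext'
  exact Set.eq_of_subset_of_ncard_le h
    (by rwa [← Nat.card_coe_set_eq, ← Nat.card_coe_set_eq]) (Set.toFinite _)

theorem quat_gens (Q : Subgroup SL5) (hQ : Nat.card Q = 8) :
    ∃ a b : SL5, a ∈ Q ∧ b ∈ Q ∧ a ^ 2 = nI ∧ b ^ 2 = nI ∧ b * a * b⁻¹ = a⁻¹ ∧
      Subgroup.closure {a, b} = Q := by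
  have hpow8 : ∀ x ∈ Q, x ^ 8 = 1 := by
    intro x hx
    have h8 : (⟨x, hx⟩ : Q) ^ 8 = 1 := by rw [← hQ]; exact pow_card_eq_one'
    simpa using congrArg Subtype.val h8
  obtain ⟨a, haQ, ha2⟩ : ∃ a ∈ Q, a ^ 2 ≠ 1 := by
    by_contra h
    push_neg at h
    have hsub : (Q : Set SL5) ⊆ {1, nI} := by
      intro x hx
      rcases uniq_inv x (h x hx) with h1 | h1 <;> simp [h1]
    have hle2 : Nat.card Q ≤ 2 := by
      calc Nat.card Q = (Q : Set SL5).ncard := Nat.card_coe_set_eq _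
        _ ≤ ({1, nI} : Set SL5).ncard := Set.ncard_le_ncard hsub (Set.toFinite _)
        _ ≤ 2 := by
            apply le_trans (Set.ncard_insert_le _ _)
            simp
    omega
  have ha4 : a ^ 4 = 1 := no_order8 a (hpow8 a haQ)
  have ha2' : a ^ 2 = nI := by
    rcases uniq_inv (a ^ 2) (by rw [← pow_mul]; exact ha4) with h | h
    · exact absurd h ha2
    · exact h
  have hord : orderOf a = 4 := by
    have h := orderOf_eq_prime_pow (p := 2) (n := 1) (x := a)
      (by rw [pow_one]; exact ha2) (by norm_num; exact ha4)
    norm_num at h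
    exact h
  obtain ⟨b, hbQ, hbz⟩ : ∃ b ∈ Q, b ∉ Subgroup.zpowers a := by
    by_contra h
    push_neg at h
    have hle : Q ≤ Subgroup.zpowers a := h
    have := Subgroup.card_le_of_le hle
    rw [hQ, Nat.card_zpowers, hord] at this
    omega
  have hb2 : b ^ 2 = nI := by
    rcases uniq_inv (b ^ 2) (by rw [← pow_mul]; exact no_order8 b (hpow8 b hbQ)) with h | h
    · exfalso
      rcases uniq_inv b h with h1 | h1
      · exact hbz (h1 ▸ Subgroup.one_mem _)
      · exact hbz (by rw [h1, ← ha2']; exact Subgroup.pow_mem _ (Subgroup.mem_zpowers a) 2)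
    · exact h
  have hanI : a ≠ nI := by
    intro h
    apply ha2
    rw [h, pow_two, nI_mul_nI]
  set aQ : Q := ⟨a, haQ⟩ with haQdef
  set bQ : Q := ⟨b, hbQ⟩ with hbQdef
  have haQord : orderOf aQ = 4 := by
    rw [← hord]; exact (Subgroup.orderOf_coe aQ).symm
  set H : Subgroup Q := Subgroup.zpowers aQ with hH
  have hHcard : Nat.card H = 4 := by rw [hH, Nat.card_zpowers, haQord]
  have hHidx : H.index = 2 := by
    have hmi := Subgroup.card_mul_index H
    rw [hHcard, hQ] at hmi
    omega
  have hbH : bQ ∉ H := by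
    intro hbh
    apply hbz
    obtain ⟨k, hk⟩ := hbh
    exact ⟨k, by simpa using congrArg Subtype.val hk⟩
  have hconj : bQ * aQ * bQ⁻¹ ∈ H := by
    have h1 : ¬ (aQ * bQ⁻¹ ∈ H) := by
      intro h
      apply hbH
      have h2 : aQ⁻¹ * (aQ * bQ⁻¹) ∈ H := H.mul_mem (H.inv_mem (Subgroup.mem_zpowers aQ)) h
      rw [← mul_assoc, inv_mul_cancel, one_mul] at h2
      exact (H.inv_mem_iff).mp h2
    rw [mul_assoc, Subgroup.mul_mem_iff_of_index_two hHidx]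
    exact iff_of_false hbH h1
  obtain ⟨k, hk⟩ := hconj
  have hcoe : a ^ k = b * a * b⁻¹ := by simpa using congrArg Subtype.val hk
  have hmod : a ^ (k % 4) = b * a * b⁻¹ := by
    have hzm := zpow_mod_orderOf a k
    rw [hord] at hzm
    rw [show (((4:ℕ)):ℤ) = (4:ℤ) from rfl] at hzm
    rw [hzm, hcoe]
  have hex : ∃ r : ℤ, 0 ≤ r ∧ r < 4 ∧ a ^ r = b * a * b⁻¹ :=
    ⟨k % 4, Int.emod_nonneg k (by norm_num), Int.emod_lt_of_pos k (by norm_num), hmod⟩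
  obtain ⟨r, hr0, hr4, hmod⟩ := hex
  have hrel : b * a * b⁻¹ = a⁻¹ := by
    interval_cases r
    · -- r = 0
      exfalso
      rw [zpow_zero] at hmod
      have ha1 : a = 1 := by
        have h1 : b⁻¹ * (b * a * b⁻¹) * b = b⁻¹ * 1 * b := by rw [← hmod]
        rw [show b⁻¹ * (b * a * b⁻¹) * b = a by group] at h1
        rw [mul_one, inv_mul_cancel] at h1
        exact h1
      exact ha2 (by rw [ha1, one_pow])
    · -- r = 1
      exfalso
      rw [zpow_one] at hmod
      have hcom : b⁻¹ * a = a * b⁻¹ := by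
        have h1 : a * b = b * a := by
          conv_lhs => rw [hmod]
          group
        calc b⁻¹ * a = b⁻¹ * (a * b) * b⁻¹ := by group
          _ = b⁻¹ * (b * a) * b⁻¹ := by rw [h1]
          _ = a * b⁻¹ := by group
      have hc2 : (a * b⁻¹) ^ 2 = 1 := by
        rw [pow_two, show a * b⁻¹ * (a * b⁻¹) = a * (b⁻¹ * a) * b⁻¹ by group, hcom,
          show a * (a * b⁻¹) * b⁻¹ = (a * a) * (b * b)⁻¹ by group, ← pow_two, ← pow_two,
          ha2', hb2, mul_inv_cancel]
      rcases uniq_inv _ hc2 with h' | h'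
      · have hab : a = b := mul_inv_eq_one.mp h'
        exact hbz (by rw [← hab]; exact Subgroup.mem_zpowers a)
      · have h3 : a * b⁻¹ = a * a := by rw [h', ← ha2', pow_two]
        have hb' : b⁻¹ = a := mul_left_cancel h3
        have hb'' : b = a⁻¹ := by rw [← inv_inv b, hb']
        exact hbz (by rw [hb'']; exact Subgroup.inv_mem _ (Subgroup.mem_zpowers a))
    · -- r = 2
      exfalso
      rw [show ((2:ℤ)) = ((2:ℕ):ℤ) from rfl, zpow_natCast, ha2'] at hmod
      have h1 : b⁻¹ * (b * a * b⁻¹) * b = b⁻¹ * nI * b := by rw [hmod]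
      rw [show b⁻¹ * (b * a * b⁻¹) * b = a by group] at h1
      rw [central_nI b⁻¹, mul_assoc, inv_mul_cancel, mul_one] at h1
      exact hanI h1
    · -- r = 3
      rw [show ((3:ℤ)) = ((3:ℕ):ℤ) from rfl, zpow_natCast] at hmod
      rw [← hmod]
      apply eq_inv_of_mul_eq_one_left
      rw [← pow_succ]
      exact ha4
  refine ⟨a, b, haQ, hbQ, ha2', hb2, hrel, ?_⟩
  set S := Subgroup.closure ({a, b} : Set SL5) with hS
  have hle : S ≤ Q := (Subgroup.closure_le Q).mpr (by
    rintro x hx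
    rcases hx with rfl | hx
    · exact haQ
    · rw [Set.mem_singleton_iff] at hx; rw [hx]; exact hbQ)
  have haS : a ∈ S := Subgroup.subset_closure (by simp)
  have hbS : b ∈ S := Subgroup.subset_closure (by simp)
  have hzle : Subgroup.zpowers a ≤ S := (Subgroup.zpowers_le).mpr haS
  have h4 : (4:ℕ) ∣ Nat.card S := by
    rw [← hord, ← Nat.card_zpowers]
    exact Subgroup.card_dvd_of_le hzle
  have h8 : Nat.card S ∣ 8 := by
    rw [← hQ]
    exact Subgroup.card_dvd_of_le hle
  have hpos : 0 < Nat.card S := Nat.card_pos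
  have hcard : Nat.card S = 8 := by
    have hle8 : Nat.card S ≤ 8 := Nat.le_of_dvd (by norm_num) h8
    have hge4 : 4 ≤ Nat.card S := Nat.le_of_dvd hpos h4
    obtain ⟨n, hn⟩ : ∃ n, Nat.card S = n := ⟨_, rfl⟩
    rw [hn] at h4 h8 hle8 hge4 ⊢
    interval_cases n
    · -- n = 4 : S = zpowers a, contradiction with b
      exfalso
      have heq := sub_eq_of_le_card hzle (by rw [hn, Nat.card_zpowers, hord])
      rw [heq] at hbz
      exact hbz hbS
    · exact absurd h4 (by norm_num)
    · exact absurd h8 (by norm_num)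
    · exact absurd h4 (by norm_num)
    · rfl
  exact sub_eq_of_le_card hle (by rw [hcard, hQ])

theorem end_rels {V : Type*} [AddCommGroup V] [Module ℂ V] (θ : Representation ℂ SL5 V)
    (hn : θ nI = -1) {a b : SL5} (ha2 : a ^ 2 = nI) (hb2 : b ^ 2 = nI)
    (hrel : b * a * b⁻¹ = a⁻¹) :
    θ a * θ a = -1 ∧ θ b * θ b = -1 ∧ θ b * θ a = -(θ a * θ b) := by
  refine ⟨?_, ?_, ?_⟩
  · rw [← map_mul, ← pow_two, ha2, hn]
  · rw [← map_mul, ← pow_two, hb2, hn]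
  · have hainv : a⁻¹ = nI * a := by
      apply inv_eq_of_mul_eq_one_right
      rw [← mul_assoc, central_nI a, mul_assoc, ← pow_two, ha2, nI_mul_nI]
    have hba : b * a = a⁻¹ * b := by
      calc b * a = (b * a * b⁻¹) * b := by group
        _ = a⁻¹ * b := by rw [hrel]
    rw [← map_mul, hba, map_mul, hainv, map_mul, hn, neg_one_mul, neg_mul]

theorem restr_irred {V : Type*} [AddCommGroup V] [Module ℂ V] (θ : Representation ℂ SL5 V)
    (hdV : Module.finrank ℂ V = 2) (hθ : IsIrreducibleRep θ) (Q : Subgroup SL5) {a b : SL5}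
    (haQ : a ∈ Q) (hbQ : b ∈ Q) (hA : θ a * θ a = -1) (hB : θ b * θ b = -1)
    (hBA : θ b * θ a = -(θ a * θ b)) : IsIrreducibleRep (θ.comp Q.subtype) := by
  refine ⟨hθ.1, fun p hsub => ?_⟩
  by_cases hp : p = ⊥
  · exact Or.inl hp
  · exact Or.inr (quat_core_top hdV (θ a) (θ b) hA hB hBA p
      (fun v hv => hsub ⟨a, haQ⟩ v hv) (fun v hv => hsub ⟨b, hbQ⟩ v hv) hp)

theorem main_thm (Q : Subgroup SL5) (hQ : Nat.card Q = 8)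
    {V W : Type*} [AddCommGroup V] [Module ℂ V] [AddCommGroup W] [Module ℂ W]
    (θ : Representation ℂ SL5 V) (θ' : Representation ℂ SL5 W)
    (hdV : Module.finrank ℂ V = 2) (hdW : Module.finrank ℂ W = 2)
    (hθ : IsIrreducibleRep θ) (hθ' : IsIrreducibleRep θ') :
    IsIrreducibleRep (θ.comp Q.subtype) ∧ IsIrreducibleRep (θ'.comp Q.subtype) ∧
      RepIso (θ.comp Q.subtype) (θ'.comp Q.subtype) := by
  obtain ⟨a, b, haQ, hbQ, ha2, hb2, hrel, hclos⟩ := quat_gens Q hQ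
  have hnV : θ nI = -1 := theta_nI θ hdV hθ
  have hnW : θ' nI = -1 := theta_nI θ' hdW hθ'
  obtain ⟨hA, hB, hBA⟩ := end_rels θ hnV ha2 hb2 hrel
  obtain ⟨hA', hB', hBA'⟩ := end_rels θ' hnW ha2 hb2 hrel
  refine ⟨restr_irred θ hdV hθ Q haQ hbQ hA hB hBA,
    restr_irred θ' hdW hθ' Q haQ hbQ hA' hB' hBA', ?_⟩
  obtain ⟨e, f, he0, heA, hfA, heB, hfB, hli⟩ := quat_basis hdV (θ a) (θ b) hA hB hBA
  obtain ⟨e', f', he0', heA', hfA', heB', hfB', hli'⟩ := quat_basis hdW (θ' a) (θ' b) hA' hB' hBA'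
  obtain ⟨bV, hbV0, hbV1⟩ := exists_basis_pair hdV hli
  obtain ⟨bW, hbW0, hbW1⟩ := exists_basis_pair hdW hli'
  set eqv : V ≃ₗ[ℂ] W := bV.equiv bW (Equiv.refl _) with heqv
  have hee' : eqv e = e' := by
    rw [← hbV0, ← hbW0, heqv]
    simpa using bV.equiv_apply (b' := bW) 0 (Equiv.refl _)
  have hff' : eqv f = f' := by
    rw [← hbV1, ← hbW1, heqv]
    simpa using bV.equiv_apply (b' := bW) 1 (Equiv.refl _)
  have hgen : ∀ g ∈ Subgroup.closure ({a, b} : Set SL5), ∀ v, eqv (θ g v) = θ' g (eqv v) := by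
    intro g hg
    induction hg using Subgroup.closure_induction with
    | mem x hx =>
        rcases hx with rfl | hx
        · -- x = a
          have hVa : eqv.toLinearMap ∘ₗ (θ x : V →ₗ[ℂ] V) = (θ' x : W →ₗ[ℂ] W) ∘ₗ eqv.toLinearMap := by
            apply bV.ext
            intro i
            fin_cases i
            · show eqv (θ x (bV 0)) = θ' x (eqv (bV 0))
              rw [hbV0, heA, map_smul, hee', heA']
            · show eqv (θ x (bV 1)) = θ' x (eqv (bV 1))
              rw [hbV1, hfA, map_smul, hff', hfA']
          intro v
          exact LinearMap.congr_fun hVa v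
        · rw [Set.mem_singleton_iff] at hx
          subst hx
          have hVb : eqv.toLinearMap ∘ₗ (θ x : V →ₗ[ℂ] V) = (θ' x : W →ₗ[ℂ] W) ∘ₗ eqv.toLinearMap := by
            apply bV.ext
            intro i
            fin_cases i
            · show eqv (θ x (bV 0)) = θ' x (eqv (bV 0))
              rw [hbV0, heB, hff', hee', heB']
            · show eqv (θ x (bV 1)) = θ' x (eqv (bV 1))
              rw [hbV1, hfB, map_neg, hee', hff', hfB']
          intro v
          exact LinearMap.congr_fun hVb v
    | one => intro v; simp
    | mul x y hx hy ihx ihy =>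
        intro v
        rw [map_mul, map_mul, Module.End.mul_apply, Module.End.mul_apply, ihx, ihy]
    | inv x hx ih =>
        intro v
        have h1 : θ x (θ x⁻¹ v) = v := by
          rw [← Module.End.mul_apply, ← map_mul, mul_inv_cancel, map_one, Module.End.one_apply]
        have h2 := ih (θ x⁻¹ v)
        rw [h1] at h2
        have h3 := congrArg (θ' x⁻¹) h2
        rw [← Module.End.mul_apply, ← map_mul, inv_mul_cancel, map_one, Module.End.one_apply] at h3
        exact h3.symm
  refine ⟨eqv, fun q v => ?_⟩
  exact hgen q.1 (by rw [hclos]; exact q.2) v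

end SL25

/-- **Statement 9.** Let `K` be a subgroup of `SL(2, ℤ/5ℤ)` of order `8` (a quaternion
subgroup) and let `θ`, `θ'` be irreducible two-dimensional complex
representations of `SL(2, ℤ/5ℤ)`. Then the restrictions of `θ` and `θ'` to `Q` are
irreducible and isomorphic to each other. -/
theorem res_two_dim_to_order8_irreducible_and_iso
    (Q : Subgroup (Matrix.SpecialLinearGroup (Fin 2) (ZMod 5))) (hQ : Nat.card Q = 8)
    {V W : Type*} [AddCommGroup V] [Module ℂ V] [AddCommGroup W] [Module ℂ W]
    (θ : Representation ℂ (Matrix.SpecialLinearGroup (Fin 2) (ZMod 5)) V)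
    (θ' : Representation ℂ (Matrix.SpecialLinearGroup (Fin 2) (ZMod 5)) W)
    (hdV : Module.finrank ℂ V = 2) (hdW : Module.finrank ℂ W = 2)
    (hθ : IsIrreducibleRep θ) (hθ' : IsIrreducibleRep θ') :
    IsIrreducibleRep (θ.comp Q.subtype) ∧ IsIrreducibleRep (θ'.comp Q.subtype) ∧
      RepIso (θ.comp Q.subtype) (θ'.comp Q.subtype) := by
  exact SL25.main_thm Q hQ θ θ' hdV hdW hθ hθ'
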